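/- The ring Q_k = ℤ[x,y,q₁,q₂,s]/(q₂·s−1, x²−q₁·sᵏ, (y−k·x)²−q₂) is a free module of rank 4 over the subring ℤ[q₁,q₂,s]/(q₂·s−1), with basis the images of 1, x, y−k·x, and x·(y−k·x). -/

import Mathlib

open MvPolynomial

/-- The coefficient ring `ℤ[q₁,q₂,s]/(q₂s−1)`, with `X 0 = q₁, X 1 = q₂, X 2 = s`. -/
abbrev NovikovRing : Type :=
  MvPolynomial (Fin 3) ℤ ⧸ Ideal.span
    ({X 1 * X 2 - 1} : Set (MvPolynomial (Fin 3) ℤ))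

/-- The quantum cohomology ring `Q_k = ℤ[x,y,q₁,q₂,s]/(q₂s−1, x²−q₁sᵏ, (y−kx)²−q₂)`
of the Hirzebruch surface `F_{2k}`, with `X 0 = x, X 1 = y, X 2 = q₁, X 3 = q₂, X 4 = s`. -/
abbrev QuantumRing (k : ℕ) : Type :=
  MvPolynomial (Fin 5) ℤ ⧸ Ideal.span
    ({X 3 * X 4 - 1,
      X 0 ^ 2 - X 2 * X 4 ^ k,
      (X 1 - (k : MvPolynomial (Fin 5) ℤ) * X 0) ^ 2 - X 3} :
      Set (MvPolynomial (Fin 5) ℤ))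

noncomputable section QH

namespace QH

/-- `X^2 - C a`. -/
def pA {R : Type*} [CommRing R] (a : R) : Polynomial R :=
  Polynomial.X ^ 2 - Polynomial.C a

lemma pA_monic {R : Type*} [CommRing R] (a : R) : (pA a).Monic :=
  Polynomial.monic_X_pow_sub_C a two_ne_zero

lemma pA_natDegree {R : Type*} [CommRing R] [Nontrivial R] (a : R) :
    (pA a).natDegree = 2 :=
  Polynomial.natDegree_X_pow_sub_C (n := 2) (r := a)

lemma root_sq {R : Type*} [CommRing R] (a : R) :
    (AdjoinRoot.root (pA a)) ^ 2 = AdjoinRoot.of (pA a) a := by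
  have e : AdjoinRoot.mk (pA a) (Polynomial.X ^ 2 - Polynomial.C a) =
      AdjoinRoot.root (pA a) ^ 2 - AdjoinRoot.of (pA a) a := by
    rw [map_sub, map_pow, AdjoinRoot.mk_X, AdjoinRoot.mk_C]
  have h : AdjoinRoot.mk (pA a) (Polynomial.X ^ 2 - Polynomial.C a) = 0 := AdjoinRoot.mk_self
  rw [e, sub_eq_zero] at h
  exact h

variable (k : ℕ)

def nq₁ : NovikovRing := Ideal.Quotient.mk _ (X 0)
def nq₂ : NovikovRing := Ideal.Quotient.mk _ (X 1)
def ns : NovikovRing := Ideal.Quotient.mk _ (X 2)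

lemma nq₂_mul_ns : nq₂ * ns = 1 := by
  rw [nq₂, ns, ← map_mul, ← map_one (Ideal.Quotient.mk _), Ideal.Quotient.mk_eq_mk_iff_sub_mem]
  exact Ideal.subset_span rfl

/-- A ring hom to ℤ, for nontriviality. -/
def χ : NovikovRing →+* ℤ :=
  Ideal.Quotient.lift _ (eval₂Hom (RingHom.id ℤ) (fun _ => (1:ℤ))) (by
    intro a ha
    rw [Ideal.mem_span_singleton] at ha
    obtain ⟨c, rfl⟩ := ha
    rw [map_mul]
    simp)

instance : Nontrivial NovikovRing := χ.domain_nontrivial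

def g3 : Fin 3 → Fin 5 := ![2, 3, 4]

abbrev J5 : Ideal (MvPolynomial (Fin 5) ℤ) :=
  Ideal.span ({X 3 * X 4 - 1,
      X 0 ^ 2 - X 2 * X 4 ^ k,
      (X 1 - (k : MvPolynomial (Fin 5) ℤ) * X 0) ^ 2 - X 3} :
      Set (MvPolynomial (Fin 5) ℤ))

def ψ0 : MvPolynomial (Fin 3) ℤ →+* QuantumRing k :=
  (Ideal.Quotient.mk (J5 k)).comp (rename g3).toRingHom

lemma ψ0_apply (a : MvPolynomial (Fin 3) ℤ) :
    ψ0 k a = Ideal.Quotient.mk (J5 k) (rename g3 a) := rfl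

lemma ψ0_X (i : Fin 3) : ψ0 k (X i) = Ideal.Quotient.mk (J5 k) (X (g3 i)) := by
  rw [ψ0_apply, rename_X]

def fRQ : NovikovRing →+* QuantumRing k :=
  Ideal.Quotient.lift _ (ψ0 k) (by
    intro a ha
    rw [Ideal.mem_span_singleton] at ha
    obtain ⟨c, rfl⟩ := ha
    rw [map_mul]
    have : ψ0 k (X 1 * X 2 - 1) = 0 := by
      have h : (rename (R := ℤ) g3) (X 1 * X 2 - 1) = X 3 * X 4 - 1 := by
        simp [g3]
      rw [ψ0_apply, h, Ideal.Quotient.eq_zero_iff_mem]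
      exact Ideal.subset_span (by simp)
    rw [this, zero_mul])

lemma fRQ_mk (a : MvPolynomial (Fin 3) ℤ) :
    fRQ k (Ideal.Quotient.mk _ a) = ψ0 k a := rfl

lemma fRQ_nq₁ : fRQ k (nq₁) = Ideal.Quotient.mk (J5 k) (X 2) := by
  rw [nq₁, fRQ_mk, ψ0_X]; rfl

lemma fRQ_nq₂ : fRQ k (nq₂) = Ideal.Quotient.mk (J5 k) (X 3) := by
  rw [nq₂, fRQ_mk, ψ0_X]; rfl

lemma fRQ_ns : fRQ k (ns) = Ideal.Quotient.mk (J5 k) (X 4) := by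
  rw [ns, fRQ_mk, ψ0_X]; rfl

/-- `A = R[x]`, adjoining the root x of `X² - q₁ sᵏ`. -/
abbrev A : Type := AdjoinRoot (pA (nq₁ * ns ^ k))

def q₂A : A k := algebraMap NovikovRing (A k) nq₂

/-- `B = A[u]`, adjoining the root u of `X² - q₂`. -/
abbrev B : Type := AdjoinRoot (pA (q₂A k))

def xB : B k := algebraMap (A k) (B k) (AdjoinRoot.root _)
def uB : B k := AdjoinRoot.root _

set_option synthInstance.maxHeartbeats 400000

lemma xB_sq : xB k ^ 2 = algebraMap NovikovRing (B k) (nq₁ * ns ^ k) := by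
  rw [xB, ← map_pow, root_sq, ← AdjoinRoot.algebraMap_eq,
    ← IsScalarTower.algebraMap_apply NovikovRing (A k) (B k) (nq₁ * ns ^ k)]

lemma uB_sq : uB k ^ 2 = algebraMap NovikovRing (B k) nq₂ := by
  rw [uB, root_sq, ← AdjoinRoot.algebraMap_eq]
  exact (IsScalarTower.algebraMap_apply NovikovRing (A k) (B k) nq₂).symm


def vB : Fin 5 → B k :=
  ![xB k, (k : B k) * xB k + uB k,
    algebraMap NovikovRing (B k) nq₁,
    algebraMap NovikovRing (B k) nq₂,
    algebraMap NovikovRing (B k) ns]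

def ψB : MvPolynomial (Fin 5) ℤ →+* B k :=
  (eval₂Hom (Int.castRingHom (B k)) (vB k))

lemma ψB_X (i : Fin 5) : ψB k (X i) = vB k i := by
  simp [ψB]

lemma ψB_X0 : ψB k (X 0) = xB k := by rw [ψB_X]; rfl
lemma ψB_X2 : ψB k (X 2) = algebraMap NovikovRing (B k) nq₁ := by rw [ψB_X]; rfl
lemma ψB_X3 : ψB k (X 3) = algebraMap NovikovRing (B k) nq₂ := by rw [ψB_X]; rfl
lemma ψB_X4 : ψB k (X 4) = algebraMap NovikovRing (B k) ns := by rw [ψB_X]; rfl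

lemma ψB_u : ψB k (X 1 - (k : MvPolynomial (Fin 5) ℤ) * X 0) = uB k := by
  rw [map_sub, map_mul, map_natCast, ψB_X0, ψB_X]
  show ((k : B k) * xB k + uB k) - (k : B k) * xB k = uB k
  ring

lemma ψB_gen1 : ψB k (X 3 * X 4 - 1) = 0 := by
  rw [map_sub, map_mul, map_one, ψB_X3, ψB_X4, ← map_mul, nq₂_mul_ns, map_one, sub_self]

lemma ψB_gen2 : ψB k (X 0 ^ 2 - X 2 * X 4 ^ k) = 0 := by
  rw [map_sub, map_pow, map_mul, map_pow, ψB_X0, ψB_X2, ψB_X4, xB_sq,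
    ← map_pow, ← map_mul, sub_self]

lemma ψB_gen3 : ψB k ((X 1 - (k : MvPolynomial (Fin 5) ℤ) * X 0) ^ 2 - X 3) = 0 := by
  rw [map_sub, map_pow, ψB_u, ψB_X3, uB_sq, sub_self]

def ΨQB : QuantumRing k →+* B k :=
  Ideal.Quotient.lift (J5 k) (ψB k) (by
    intro a ha
    refine Submodule.span_induction ?_ ?_ ?_ ?_ ha
    · rintro x (rfl | rfl | rfl)
      · exact ψB_gen1 k
      · exact ψB_gen2 k
      · exact ψB_gen3 k
    · simp
    · intro x y _ _ hx hy; rw [map_add, hx, hy, add_zero]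
    · intro c x _ hx; rw [smul_eq_mul, map_mul, hx, mul_zero])

lemma ΨQB_mk (a : MvPolynomial (Fin 5) ℤ) :
    ΨQB k (Ideal.Quotient.mk (J5 k) a) = ψB k a := rfl


def xQ : QuantumRing k := Ideal.Quotient.mk (J5 k) (X 0)
def uQ : QuantumRing k := Ideal.Quotient.mk (J5 k) (X 1 - (k : MvPolynomial (Fin 5) ℤ) * X 0)

lemma xQ_sq : xQ k ^ 2 = fRQ k (nq₁ * ns ^ k) := by
  rw [map_mul, map_pow, fRQ_nq₁, fRQ_ns, xQ,
    ← map_pow (Ideal.Quotient.mk (J5 k)) (X 0) 2,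
    ← map_pow (Ideal.Quotient.mk (J5 k)) (X 4) k,
    ← map_mul (Ideal.Quotient.mk (J5 k)) (X 2) (X 4 ^ k),
    Ideal.Quotient.mk_eq_mk_iff_sub_mem]
  exact Ideal.subset_span (by simp)

lemma uQ_sq : uQ k ^ 2 = fRQ k nq₂ := by
  rw [fRQ_nq₂, uQ,
    ← map_pow (Ideal.Quotient.mk (J5 k)) (X 1 - (k : MvPolynomial (Fin 5) ℤ) * X 0) 2,
    Ideal.Quotient.mk_eq_mk_iff_sub_mem]
  exact Ideal.subset_span (by simp)

def fA : A k →+* QuantumRing k :=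
  AdjoinRoot.lift (fRQ k) (xQ k) (by
    simp only [pA]
    rw [Polynomial.eval₂_sub, Polynomial.eval₂_pow, Polynomial.eval₂_X,
      Polynomial.eval₂_C, xQ_sq, sub_self])

lemma fA_root : fA k (AdjoinRoot.root _) = xQ k := AdjoinRoot.lift_root _

lemma fA_of (r : NovikovRing) : fA k (algebraMap NovikovRing (A k) r) = fRQ k r :=
  AdjoinRoot.lift_of _

def ΦBQ : B k →+* QuantumRing k :=
  AdjoinRoot.lift (fA k) (uQ k) (by
    simp only [pA]
    rw [Polynomial.eval₂_sub, Polynomial.eval₂_pow, Polynomial.eval₂_X,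
      Polynomial.eval₂_C, uQ_sq]
    rw [show q₂A k = algebraMap NovikovRing (A k) nq₂ from rfl, fA_of, sub_self])

lemma ΦBQ_uB : ΦBQ k (uB k) = uQ k := AdjoinRoot.lift_root _

lemma ΦBQ_ofA (a : A k) : ΦBQ k (algebraMap (A k) (B k) a) = fA k a :=
  AdjoinRoot.lift_of _

lemma ΦBQ_xB : ΦBQ k (xB k) = xQ k := by
  rw [xB, ΦBQ_ofA, fA_root]

lemma ΦBQ_alg (r : NovikovRing) : ΦBQ k (algebraMap NovikovRing (B k) r) = fRQ k r := by
  rw [IsScalarTower.algebraMap_apply NovikovRing (A k) (B k), ΦBQ_ofA, fA_of]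

/-- Ψ ∘ fRQ = algebraMap -/
lemma Ψ_fRQ (r : NovikovRing) : ΨQB k (fRQ k r) = algebraMap NovikovRing (B k) r := by
  obtain ⟨w, rfl⟩ := Ideal.Quotient.mk_surjective r
  rw [fRQ_mk, ψ0_apply, ΨQB_mk]
  have : (ψB k).comp (rename g3).toRingHom =
      (algebraMap NovikovRing (B k)).comp (Ideal.Quotient.mk _) := by
    apply MvPolynomial.ringHom_ext
    · intro r
      simp only [RingHom.comp_apply, AlgHom.toRingHom_eq_coe, AlgHom.coe_toRingHom]
      rw [eq_intCast (MvPolynomial.C : ℤ →+* MvPolynomial (Fin 3) ℤ) r]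
      simp
    · intro i
      simp only [RingHom.comp_apply, AlgHom.toRingHom_eq_coe, AlgHom.coe_toRingHom, rename_X,
        ψB_X]
      fin_cases i <;> rfl
  exact congrFun (congrArg DFunLike.coe this) w


lemma Ψ_xQ : ΨQB k (xQ k) = xB k := by rw [xQ, ΨQB_mk, ψB_X0]
lemma Ψ_uQ : ΨQB k (uQ k) = uB k := by rw [uQ, ΨQB_mk, ψB_u]

lemma Ψ_fA (a : A k) : ΨQB k (fA k a) = algebraMap (A k) (B k) a := by
  obtain ⟨P, rfl⟩ := AdjoinRoot.mk_surjective a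
  have hcomp : (ΨQB k).comp (fRQ k) = algebraMap NovikovRing (B k) :=
    RingHom.ext (Ψ_fRQ k)
  rw [fA, AdjoinRoot.lift_mk, Polynomial.hom_eval₂, hcomp, Ψ_xQ, ← AdjoinRoot.aeval_eq,
    Polynomial.aeval_def, Polynomial.hom_eval₂,
    ← IsScalarTower.algebraMap_eq NovikovRing (A k) (B k)]
  rfl

lemma ΨΦ (b : B k) : ΨQB k (ΦBQ k b) = b := by
  obtain ⟨P, rfl⟩ := AdjoinRoot.mk_surjective b
  have hcomp : (ΨQB k).comp (fA k) = algebraMap (A k) (B k) :=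
    RingHom.ext (Ψ_fA k)
  rw [ΦBQ, AdjoinRoot.lift_mk, Polynomial.hom_eval₂, hcomp, Ψ_uQ, ← AdjoinRoot.aeval_eq,
    Polynomial.aeval_def]
  rfl

lemma ΦΨ (x : QuantumRing k) : ΦBQ k (ΨQB k x) = x := by
  obtain ⟨P, rfl⟩ := Ideal.Quotient.mk_surjective x
  show ΦBQ k (ΨQB k (Ideal.Quotient.mk (J5 k) P)) = Ideal.Quotient.mk (J5 k) P
  rw [ΨQB_mk]
  have : (ΦBQ k).comp (ψB k) = Ideal.Quotient.mk (J5 k) := by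
    apply MvPolynomial.ringHom_ext
    · intro r
      simp only [RingHom.comp_apply]
      rw [eq_intCast (MvPolynomial.C : ℤ →+* MvPolynomial (Fin 5) ℤ) r]
      simp
    · intro i
      simp only [RingHom.comp_apply, ψB_X]
      fin_cases i
      · show ΦBQ k (xB k) = Ideal.Quotient.mk (J5 k) (X 0)
        rw [ΦBQ_xB]; rfl
      · show ΦBQ k ((k : B k) * xB k + uB k) = Ideal.Quotient.mk (J5 k) (X 1)
        rw [map_add, map_mul, map_natCast, ΦBQ_xB, ΦBQ_uB, xQ, uQ,
          ← map_natCast (Ideal.Quotient.mk (J5 k)) k,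
          ← map_mul (Ideal.Quotient.mk (J5 k)) ((k : MvPolynomial (Fin 5) ℤ)) (X 0),
          ← map_add (Ideal.Quotient.mk (J5 k)) ((k : MvPolynomial (Fin 5) ℤ) * X 0)
            (X 1 - (k : MvPolynomial (Fin 5) ℤ) * X 0)]
        congr 1
        ring
      · show ΦBQ k (algebraMap NovikovRing (B k) nq₁) = Ideal.Quotient.mk (J5 k) (X 2)
        rw [ΦBQ_alg, fRQ_nq₁]
      · show ΦBQ k (algebraMap NovikovRing (B k) nq₂) = Ideal.Quotient.mk (J5 k) (X 3)
        rw [ΦBQ_alg, fRQ_nq₂]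
      · show ΦBQ k (algebraMap NovikovRing (B k) ns) = Ideal.Quotient.mk (J5 k) (X 4)
        rw [ΦBQ_alg, fRQ_ns]
  exact congrFun (congrArg DFunLike.coe this) P

/-- nontriviality of A -/
def χA : A k →+* ℤ :=
  AdjoinRoot.lift χ 1 (by
    simp only [pA]
    rw [Polynomial.eval₂_sub, Polynomial.eval₂_pow, Polynomial.eval₂_X, Polynomial.eval₂_C]
    have h1 : χ (nq₁) = 1 := by simp [χ, nq₁]
    have h2 : χ (ns) = 1 := by simp [χ, ns]
    rw [map_mul, map_pow, h1, h2, one_pow, one_pow, mul_one, sub_self])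

instance : Nontrivial (A k) := (χA k).domain_nontrivial

def χB : B k →+* ℤ :=
  AdjoinRoot.lift (χA k) 1 (by
    simp only [pA]
    rw [Polynomial.eval₂_sub, Polynomial.eval₂_pow, Polynomial.eval₂_X, Polynomial.eval₂_C]
    have h2 : χA k (q₂A k) = 1 := by
      rw [show q₂A k = algebraMap NovikovRing (A k) nq₂ from rfl,
        AdjoinRoot.algebraMap_eq, χA, AdjoinRoot.lift_of]
      simp [χ, nq₂]
    rw [h2, one_pow, sub_self])

instance : Nontrivial (B k) := (χB k).domain_nontrivial

def basA : Module.Basis (Fin 2) NovikovRing (A k) :=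
  (AdjoinRoot.powerBasis' (pA_monic _)).basis.reindex (finCongr (pA_natDegree _))

def basB : Module.Basis (Fin 2) (A k) (B k) :=
  (AdjoinRoot.powerBasis' (pA_monic _)).basis.reindex (finCongr (pA_natDegree _))

lemma basA_apply (i : Fin 2) : basA k i = AdjoinRoot.root _ ^ (i : ℕ) := by
  rw [basA, Module.Basis.reindex_apply, PowerBasis.basis_eq_pow, AdjoinRoot.powerBasis'_gen]
  rfl

lemma basB_apply (i : Fin 2) : basB k i = AdjoinRoot.root _ ^ (i : ℕ) := by
  rw [basB, Module.Basis.reindex_apply, PowerBasis.basis_eq_pow, AdjoinRoot.powerBasis'_gen]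
  rfl

def basRB : Module.Basis (Fin 2 × Fin 2) NovikovRing (B k) := (basA k).smulTower (basB k)

lemma Φ_basRB (i j : Fin 2) :
    ΦBQ k (basRB k (i, j)) = xQ k ^ (i : ℕ) * uQ k ^ (j : ℕ) := by
  rw [basRB, Module.Basis.smulTower_apply, Algebra.smul_def, basA_apply, basB_apply,
    map_mul, ΦBQ_ofA, map_pow, fA_root]
  rw [show (AdjoinRoot.root (pA (q₂A k)) : B k) = uB k from rfl, map_pow, ΦBQ_uB]

def e4 : Fin 4 ≃ Fin 2 × Fin 2 :=
  ⟨![(0,0), (1,0), (0,1), (1,1)], fun p => ![![0,2],![1,3]] p.1 p.2, by decide, by decide⟩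


def QMod : Module NovikovRing (QuantumRing k) := Module.compHom _ (fRQ k)

def eLin : letI := QMod k; B k ≃ₗ[NovikovRing] QuantumRing k :=
  letI := QMod k
  { toFun := ΦBQ k
    invFun := ΨQB k
    left_inv := ΨΦ k
    right_inv := ΦΨ k
    map_add' := map_add _
    map_smul' := fun r b => by
      show ΦBQ k (r • b) = fRQ k r * ΦBQ k b
      rw [Algebra.smul_def r b, map_mul, ΦBQ_alg] }

def bQ : letI := QMod k; Module.Basis (Fin 4) NovikovRing (QuantumRing k) :=
  letI := QMod k
  ((basRB k).reindex (e4).symm).map (eLin k)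

lemma bQ_apply (i : Fin 4) :
    letI := QMod k
    bQ k i = ΦBQ k (basRB k (e4 i)) := by
  letI := QMod k
  rw [bQ, Module.Basis.map_apply, Module.Basis.reindex_apply, Equiv.symm_symm]
  rfl

lemma bQ_0 : (letI := QMod k; bQ k 0) = Ideal.Quotient.mk (J5 k) 1 := by
  rw [bQ_apply, show e4 0 = ((0 : Fin 2), (0 : Fin 2)) from rfl, Φ_basRB]
  simp

lemma bQ_1 : (letI := QMod k; bQ k 1) = Ideal.Quotient.mk (J5 k) (X 0) := by
  rw [bQ_apply, show e4 1 = ((1 : Fin 2), (0 : Fin 2)) from rfl, Φ_basRB]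
  show xQ k ^ 1 * uQ k ^ 0 = _
  rw [pow_one, pow_zero, mul_one, xQ]

lemma bQ_2 : (letI := QMod k; bQ k 2) =
    Ideal.Quotient.mk (J5 k) (X 1 - (k : MvPolynomial (Fin 5) ℤ) * X 0) := by
  rw [bQ_apply, show e4 2 = ((0 : Fin 2), (1 : Fin 2)) from rfl, Φ_basRB]
  show xQ k ^ 0 * uQ k ^ 1 = _
  rw [pow_one, pow_zero, one_mul, uQ]

lemma bQ_3 : (letI := QMod k; bQ k 3) =
    Ideal.Quotient.mk (J5 k) (X 0 * (X 1 - (k : MvPolynomial (Fin 5) ℤ) * X 0)) := by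
  rw [bQ_apply, show e4 3 = ((1 : Fin 2), (1 : Fin 2)) from rfl, Φ_basRB]
  show xQ k ^ 1 * uQ k ^ 1 = _
  rw [pow_one, pow_one, xQ, uQ,
    ← map_mul (Ideal.Quotient.mk (J5 k)) (X 0) (X 1 - (k : MvPolynomial (Fin 5) ℤ) * X 0)]

end QH
end QH

/-- `Q_k` is a free module of rank 4 over `ℤ[q₁,q₂,s]/(q₂s−1)` (acting via
`q₁ ↦ q₁, q₂ ↦ q₂, s ↦ s`), with basis the images of `1, x, y−kx, x·(y−kx)`. -/
theorem stmt_18 (k : ℕ) :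
    ∃ f : NovikovRing →+* QuantumRing k,
      f (Ideal.Quotient.mk _ (X 0)) = Ideal.Quotient.mk _ (X 2) ∧
      f (Ideal.Quotient.mk _ (X 1)) = Ideal.Quotient.mk _ (X 3) ∧
      f (Ideal.Quotient.mk _ (X 2)) = Ideal.Quotient.mk _ (X 4) ∧
      ∃ b : @Module.Basis (Fin 4) NovikovRing (QuantumRing k) _ _ (Module.compHom _ f),
        b 0 = Ideal.Quotient.mk _ 1 ∧
        b 1 = Ideal.Quotient.mk _ (X 0) ∧
        b 2 = Ideal.Quotient.mk _ (X 1 - (k : MvPolynomial (Fin 5) ℤ) * X 0) ∧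
        b 3 = Ideal.Quotient.mk _
            (X 0 * (X 1 - (k : MvPolynomial (Fin 5) ℤ) * X 0)) := by
  exact ⟨QH.fRQ k, QH.fRQ_nq₁ k, QH.fRQ_nq₂ k, QH.fRQ_ns k,
    ⟨QH.bQ k, QH.bQ_0 k, QH.bQ_1 k, QH.bQ_2 k, QH.bQ_3 k⟩⟩
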